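/- For every integer d ≥ 1 and reals α > d and λ > 0 there exists a constant c > 0 such that for every real b ≥ 1, ∑_{y ∈ ℤ^d, y ≠ 0} (1 − exp(−λ·b·‖y‖^{−α})) ≤ c·b^{d/α}. -/

import Mathlib

/-- The Euclidean norm of a point of the integer lattice `ℤ^d`. -/
noncomputable def euclNorm {d : ℕ} (y : Fin d → ℤ) : ℝ :=
  Real.sqrt (∑ i, ((y i : ℝ)) ^ 2)

open Finset

def supN {d : ℕ} (z : Fin d → ℤ) : ℕ := Finset.univ.sup fun i => (z i).natAbs

noncomputable def latbox (d m : ℕ) : Finset (Fin d → ℤ) :=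
  Fintype.piFinset fun _ : Fin d => Finset.Icc (-(m : ℤ)) m

lemma mem_latbox {d m : ℕ} {z : Fin d → ℤ} : z ∈ latbox d m ↔ supN z ≤ m := by
  simp only [latbox, Fintype.mem_piFinset, Finset.mem_Icc, supN, Finset.sup_le_iff,
    Finset.mem_univ, true_imp_iff]
  constructor
  · intro h i; have := h i; omega
  · intro h i; have := h i; omega

lemma card_latbox (d m : ℕ) : (latbox d m).card = (2 * m + 1) ^ d := by
  rw [latbox, Fintype.card_piFinset_const, Int.card_Icc]
  congr 1
  omega

lemma one_le_supN {d : ℕ} {z : Fin d → ℤ} (hz : z ≠ 0) : 1 ≤ supN z := by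
  rcases Function.ne_iff.mp hz with ⟨i, hi⟩
  have h1 : 1 ≤ (z i).natAbs := Int.natAbs_pos.mpr (by simpa using hi)
  exact le_trans h1 (Finset.le_sup (f := fun i => (z i).natAbs) (Finset.mem_univ i))

lemma supN_le_euclNorm {d : ℕ} (hd : 1 ≤ d) (z : Fin d → ℤ) :
    (supN z : ℝ) ≤ euclNorm z := by
  have hne : (Finset.univ : Finset (Fin d)).Nonempty := by
    simpa [Finset.univ_nonempty_iff] using Fin.pos_iff_nonempty.mp hd
  obtain ⟨i, -, hi⟩ := Finset.exists_mem_eq_sup Finset.univ hne fun i => (z i).natAbs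
  rw [supN, hi]
  have h1 : ((z i).natAbs : ℝ) = |((z i : ℝ))| := by
    push_cast [Nat.cast_natAbs]; norm_cast
  rw [h1, ← Real.sqrt_sq_eq_abs, euclNorm]
  apply Real.sqrt_le_sqrt
  exact Finset.single_le_sum (fun j _ => sq_nonneg ((z j : ℝ))) (Finset.mem_univ i)

lemma euclNorm_nonneg {d : ℕ} (z : Fin d → ℤ) : 0 ≤ euclNorm z := Real.sqrt_nonneg _


lemma mvt_step {p : ℝ} (hp : p < 0) {x : ℝ} (hx : 1 ≤ x) :
    ((-p) * 2 ^ (p - 1)) * x ^ (p - 1) ≤ x ^ p - (x + 1) ^ p := by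
  have hx0 : (0 : ℝ) < x := lt_of_lt_of_le one_pos hx
  obtain ⟨c, hc, hceq⟩ := exists_hasDerivAt_eq_slope (fun t : ℝ => t ^ p)
      (fun t : ℝ => p * t ^ (p - 1)) (by linarith : x < x + 1)
      (by
        apply ContinuousOn.rpow_const continuousOn_id
        intro t ht
        refine Or.inl ?_
        intro h
        simp only [id_eq] at h
        have := ht.1
        rw [h] at this; linarith)
      (by
        intro t ht
        refine Real.hasDerivAt_rpow_const (Or.inl ?_)
        intro h
        have := ht.1
        rw [h] at this; linarith)
  rcases hc with ⟨hc1, hc2⟩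
  have hc0 : (0 : ℝ) < c := by linarith
  have heq : x ^ p - (x + 1) ^ p = (-p) * c ^ (p - 1) := by
    have h0 : p * c ^ (p - 1) = (x + 1) ^ p - x ^ p := by
      rw [hceq]; ring_nf
    linarith [h0]
  rw [heq]
  have h1 : (2 : ℝ) ^ (p - 1) * x ^ (p - 1) = (2 * x) ^ (p - 1) := by
    rw [Real.mul_rpow (by norm_num) (le_of_lt hx0)]
  have h2 : (2 * x) ^ (p - 1) ≤ c ^ (p - 1) := by
    apply Real.rpow_le_rpow_of_nonpos hc0 (by linarith) (by linarith)
  have hnp : (0 : ℝ) < -p := by linarith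
  calc (-p) * 2 ^ (p - 1) * x ^ (p - 1) = (-p) * (2 * x) ^ (p - 1) := by rw [mul_assoc, h1]
    _ ≤ (-p) * c ^ (p - 1) := mul_le_mul_of_nonneg_left h2 (le_of_lt hnp)

lemma tail_bound {p : ℝ} (hp : p < 0) :
    ∃ C > (0 : ℝ), ∀ N M : ℕ, 1 ≤ N →
      ∑ m ∈ Finset.Ioc N M, (m : ℝ) ^ (p - 1) ≤ C * (N : ℝ) ^ p := by
  have hk : (0 : ℝ) < (-p) * 2 ^ (p - 1) := by
    apply mul_pos (by linarith) (Real.rpow_pos_of_pos two_pos _)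
  refine ⟨((-p) * 2 ^ (p - 1))⁻¹, inv_pos.mpr hk, ?_⟩
  intro N M hN
  have hN0 : (0 : ℝ) < (N : ℝ) := by exact_mod_cast hN
  rcases le_or_gt M N with hMN | hMN
  · rw [Finset.Ioc_eq_empty (by omega), Finset.sum_empty]
    positivity
  · have step : ∀ m ∈ Finset.Ioc N M, (m : ℝ) ^ (p - 1)
        ≤ ((-p) * 2 ^ (p - 1))⁻¹ * ((m : ℝ) ^ p - ((m + 1 : ℕ) : ℝ) ^ p) := by
      intro m hm
      rw [Finset.mem_Ioc] at hm
      have hm1 : (1 : ℝ) ≤ (m : ℝ) := by exact_mod_cast le_trans hN (le_of_lt hm.1)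
      have h2 : ((m + 1 : ℕ) : ℝ) = (m : ℝ) + 1 := by push_cast; ring
      rw [h2, le_inv_mul_iff₀ hk]
      exact mvt_step hp hm1
    refine le_trans (Finset.sum_le_sum step) ?_
    rw [← Finset.mul_sum]
    have htel : ∑ m ∈ Finset.Ioc N M, ((m : ℝ) ^ p - ((m + 1 : ℕ) : ℝ) ^ p)
        = ((N + 1 : ℕ) : ℝ) ^ p - ((M + 1 : ℕ) : ℝ) ^ p := by
      rw [← Finset.Ico_add_one_add_one_eq_Ioc, Finset.sum_Ico_eq_sum_range]
      have hd : M + 1 - (N + 1) = M - N := by omega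
      rw [hd]
      calc ∑ k ∈ Finset.range (M - N), (((N.succ + k : ℕ) : ℝ) ^ p - ((N.succ + k + 1 : ℕ) : ℝ) ^ p)
          = ∑ i ∈ Finset.range (M - N),
              (((N + 1 + i : ℕ) : ℝ) ^ p - ((N + 1 + (i + 1) : ℕ) : ℝ) ^ p) :=
            Finset.sum_congr rfl (fun i _ => by congr 3 <;> omega)
        _ = ((N + 1 + 0 : ℕ) : ℝ) ^ p - ((N + 1 + (M - N) : ℕ) : ℝ) ^ p :=
            Finset.sum_range_sub' (fun i => ((N + 1 + i : ℕ) : ℝ) ^ p) (M - N)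
        _ = ((N + 1 : ℕ) : ℝ) ^ p - ((M + 1 : ℕ) : ℝ) ^ p := by
            congr 3 <;> omega
    rw [htel]
    have h3 : ((N + 1 : ℕ) : ℝ) ^ p - ((M + 1 : ℕ) : ℝ) ^ p ≤ ((N : ℝ)) ^ p := by
      have h4 : ((N + 1 : ℕ) : ℝ) ^ p ≤ (N : ℝ) ^ p := by
        apply Real.rpow_le_rpow_of_nonpos hN0 (by push_cast; linarith) (le_of_lt hp)
      have h5 : (0 : ℝ) ≤ ((M + 1 : ℕ) : ℝ) ^ p := Real.rpow_nonneg (by positivity) _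
      linarith
    exact mul_le_mul_of_nonneg_left h3 (le_of_lt (inv_pos.mpr hk))

lemma shell_card_le {d m : ℕ} (hd : 1 ≤ d) (hm : 1 ≤ m) {T : Finset (Fin d → ℤ)}
    (hT : ∀ z ∈ T, supN z = m) :
    (T.card : ℝ) ≤ 2 * d * (3 * (m : ℝ)) ^ (d - 1) := by
  have hm0 : (0 : ℝ) < (m : ℝ) := by exact_mod_cast hm
  have hbox : latbox d (m - 1) ⊆ latbox d m := fun z hz =>
    mem_latbox.2 (le_trans (mem_latbox.1 hz) (by omega))
  have hsub : T ⊆ latbox d m \ latbox d (m - 1) := by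
    intro z hz
    rw [Finset.mem_sdiff, mem_latbox, mem_latbox, hT z hz]
    omega
  have hcard : T.card ≤ (2 * m + 1) ^ d - (2 * (m - 1) + 1) ^ d := by
    refine le_trans (Finset.card_le_card hsub) ?_
    rw [Finset.card_sdiff_of_subset hbox, card_latbox, card_latbox]
  have hle : (2 * (m - 1) + 1) ^ d ≤ (2 * m + 1) ^ d := Nat.pow_le_pow_left (by omega) d
  set a : ℝ := 2 * (m : ℝ) + 1 with ha
  set b : ℝ := 2 * (m : ℝ) - 1 with hb
  have hbc : ((2 * (m - 1) + 1 : ℕ) : ℝ) = b := by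
    have : ((m - 1 : ℕ) : ℝ) = (m : ℝ) - 1 := by
      rw [Nat.cast_sub hm]; simp
    push_cast [this]; ring
  have hcr : (T.card : ℝ) ≤ a ^ d - b ^ d := by
    calc (T.card : ℝ) ≤ (((2 * m + 1) ^ d - (2 * (m - 1) + 1) ^ d : ℕ) : ℝ) := by
          exact_mod_cast hcard
      _ = a ^ d - b ^ d := by
          rw [Nat.cast_sub hle, Nat.cast_pow, Nat.cast_pow, hbc]
          norm_num [ha]
  have hgeom : a ^ d - b ^ d = (∑ i ∈ Finset.range d, a ^ i * b ^ (d - 1 - i)) * (a - b) :=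
    (geom_sum₂_mul a b d).symm
  have hb0 : (0 : ℝ) ≤ b := by rw [hb]; linarith
  have hba : b ≤ a := by rw [ha, hb]; linarith
  have hterm : ∀ i ∈ Finset.range d, a ^ i * b ^ (d - 1 - i) ≤ a ^ (d - 1) := by
    intro i hi
    rw [Finset.mem_range] at hi
    have h1 : a ^ i * b ^ (d - 1 - i) ≤ a ^ i * a ^ (d - 1 - i) := by
      apply mul_le_mul_of_nonneg_left (pow_le_pow_left₀ hb0 hba _) (by positivity)
    rw [← pow_add] at h1
    have : i + (d - 1 - i) = d - 1 := by omega
    rwa [this] at h1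
  have hsum : (∑ i ∈ Finset.range d, a ^ i * b ^ (d - 1 - i)) ≤ d * a ^ (d - 1) := by
    calc (∑ i ∈ Finset.range d, a ^ i * b ^ (d - 1 - i))
        ≤ ∑ _i ∈ Finset.range d, a ^ (d - 1) := Finset.sum_le_sum hterm
      _ = d * a ^ (d - 1) := by rw [Finset.sum_const, Finset.card_range, nsmul_eq_mul]
  have hm1 : (1 : ℝ) ≤ (m : ℝ) := by exact_mod_cast hm
  have haa : a ≤ 3 * (m : ℝ) := by rw [ha]; linarith
  have hfin : a ^ (d - 1) ≤ (3 * (m : ℝ)) ^ (d - 1) :=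
    pow_le_pow_left₀ (by rw [ha]; linarith) haa _
  calc (T.card : ℝ) ≤ a ^ d - b ^ d := hcr
    _ = (∑ i ∈ Finset.range d, a ^ i * b ^ (d - 1 - i)) * (a - b) := hgeom
    _ = (∑ i ∈ Finset.range d, a ^ i * b ^ (d - 1 - i)) * 2 := by rw [ha, hb]; ring_nf
    _ ≤ (d * a ^ (d - 1)) * 2 := by
        apply mul_le_mul_of_nonneg_right hsum (by norm_num)
    _ = 2 * d * a ^ (d - 1) := by ring
    _ ≤ 2 * d * (3 * (m : ℝ)) ^ (d - 1) := by
        apply mul_le_mul_of_nonneg_left hfin (by positivity)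

lemma main_bound {d : ℕ} (hd : 1 ≤ d) {α lam : ℝ} (hα : (d : ℝ) < α) (hlam : 0 < lam) :
    ∃ c > (0 : ℝ), ∀ b : ℝ, 1 ≤ b → ∀ G : Finset (Fin d → ℤ), (∀ z ∈ G, z ≠ 0) →
      ∑ z ∈ G, (1 - Real.exp (-(lam * b * euclNorm z ^ (-α)))) ≤ c * b ^ ((d : ℝ) / α) := by
  have hd1 : (1 : ℝ) ≤ (d : ℝ) := by exact_mod_cast hd
  have hα0 : (0 : ℝ) < α := by linarith
  set p : ℝ := (d : ℝ) - α with hpdef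
  have hp : p < 0 := by rw [hpdef]; linarith
  obtain ⟨C0, hC0, htail⟩ := tail_bound hp
  set K : ℝ := 2 * d * 3 ^ (d - 1) with hKdef
  have hK0 : 0 < K := by
    rw [hKdef]; positivity
  refine ⟨3 ^ d + lam * K * C0 * 2 ^ (-p), by positivity, ?_⟩
  intro b hb G hG
  have hb0 : (0 : ℝ) < b := by linarith
  set r : ℝ := b ^ α⁻¹ with hrdef
  have hr1 : (1 : ℝ) ≤ r := by
    rw [hrdef, ← Real.one_rpow α⁻¹]
    exact Real.rpow_le_rpow zero_le_one hb (inv_nonneg.2 hα0.le)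
  set N : ℕ := ⌊r⌋₊ with hNdef
  have hN1 : 1 ≤ N := Nat.le_floor (by exact_mod_cast hr1)
  have hN0 : (0 : ℝ) < (N : ℝ) := by exact_mod_cast hN1
  have hNr : (N : ℝ) ≤ r := Nat.floor_le (by positivity)
  have hrN : r ≤ 2 * N := by
    have h1 := Nat.lt_floor_add_one r
    have h2 : (1 : ℝ) ≤ (N : ℝ) := by exact_mod_cast hN1
    rw [hNdef]; push_cast; rw [← hNdef]; linarith
  -- b ^ (d/α) facts
  have hrd : r ^ (d : ℕ) = b ^ ((d : ℝ) / α) := by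
    rw [hrdef, ← Real.rpow_natCast (b ^ α⁻¹) d, ← Real.rpow_mul hb0.le]
    congr 1
    field_simp
  have hbrp : b * r ^ p = b ^ ((d : ℝ) / α) := by
    rw [hrdef, ← Real.rpow_mul hb0.le]
    nth_rewrite 1 [← Real.rpow_one b]
    rw [← Real.rpow_add hb0]
    congr 1
    rw [hpdef]
    field_simp
    ring
  -- basic facts about the summand
  set f : (Fin d → ℤ) → ℝ := fun z => 1 - Real.exp (-(lam * b * euclNorm z ^ (-α))) with hfdef
  have ht0 : ∀ z : Fin d → ℤ, 0 ≤ lam * b * euclNorm z ^ (-α) := by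
    intro z
    have := Real.rpow_nonneg (euclNorm_nonneg z) (-α)
    positivity
  have hf1 : ∀ z : Fin d → ℤ, f z ≤ 1 := by
    intro z
    have := Real.exp_pos (-(lam * b * euclNorm z ^ (-α)))
    rw [hfdef]; dsimp only; linarith
  have hf0 : ∀ z : Fin d → ℤ, 0 ≤ f z := by
    intro z
    have h1 : Real.exp (-(lam * b * euclNorm z ^ (-α))) ≤ 1 := by
      rw [Real.exp_le_one_iff]
      linarith [ht0 z]
    rw [hfdef]; dsimp only; linarith
  have hfle : ∀ z : Fin d → ℤ, z ≠ 0 → f z ≤ lam * b * (supN z : ℝ) ^ (-α) := by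
    intro z hz
    have hs1 : (1 : ℝ) ≤ (supN z : ℝ) := by exact_mod_cast one_le_supN hz
    have h1 : f z ≤ lam * b * euclNorm z ^ (-α) := by
      have := Real.add_one_le_exp (-(lam * b * euclNorm z ^ (-α)))
      rw [hfdef]; dsimp only; linarith
    refine le_trans h1 ?_
    apply mul_le_mul_of_nonneg_left _ (by positivity : (0:ℝ) ≤ lam * b)
    exact Real.rpow_le_rpow_of_nonpos (by linarith) (supN_le_euclNorm hd z) (by linarith)
  -- split the sum
  classical
  rw [← Finset.sum_filter_add_sum_filter_not G (fun z => supN z ≤ N) f]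
  set G1 := G.filter (fun z => supN z ≤ N) with hG1
  set G2 := G.filter (fun z => ¬ supN z ≤ N) with hG2
  -- Part 1
  have hpart1 : ∑ z ∈ G1, f z ≤ 3 ^ d * b ^ ((d : ℝ) / α) := by
    have hc1 : ∑ z ∈ G1, f z ≤ (G1.card : ℝ) := by
      calc ∑ z ∈ G1, f z ≤ ∑ _z ∈ G1, (1 : ℝ) := Finset.sum_le_sum fun z _ => hf1 z
        _ = (G1.card : ℝ) := by rw [Finset.sum_const, nsmul_eq_mul, mul_one]
    have hsub : G1 ⊆ latbox d N := by
      intro z hz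
      rw [hG1, Finset.mem_filter] at hz
      exact mem_latbox.2 hz.2
    have hc2 : (G1.card : ℝ) ≤ ((2 * N + 1 : ℕ) : ℝ) ^ d := by
      have := Finset.card_le_card hsub
      rw [card_latbox] at this
      exact_mod_cast this
    have hc3 : ((2 * N + 1 : ℕ) : ℝ) ^ d ≤ (3 * r) ^ d := by
      apply pow_le_pow_left₀ (by positivity)
      push_cast
      linarith
    have hc4 : (3 * r) ^ d = 3 ^ d * b ^ ((d : ℝ) / α) := by
      rw [mul_pow, hrd]
    linarith
  -- Part 2
  have hpart2 : ∑ z ∈ G2, f z ≤ lam * K * C0 * 2 ^ (-p) * b ^ ((d : ℝ) / α) := by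
    set M := G2.sup supN with hM
    have hmaps : ∀ z ∈ G2, supN z ∈ Finset.Ioc N M := by
      intro z hz
      rw [hG2, Finset.mem_filter] at hz
      rw [Finset.mem_Ioc]
      exact ⟨by omega, Finset.le_sup (f := supN) (by rw [hG2, Finset.mem_filter]; exact hz)⟩
    have hstep1 : ∑ z ∈ G2, f z ≤ lam * b * ∑ z ∈ G2, (supN z : ℝ) ^ (-α) := by
      rw [Finset.mul_sum]
      apply Finset.sum_le_sum
      intro z hz
      rw [hG2, Finset.mem_filter] at hz
      exact hfle z (hG z hz.1)
    have hfiber := Finset.sum_fiberwise_of_maps_to hmaps (fun z => (supN z : ℝ) ^ (-α))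
    have hstep2 : ∑ z ∈ G2, (supN z : ℝ) ^ (-α) ≤ K * ∑ m ∈ Finset.Ioc N M, (m : ℝ) ^ (p - 1) := by
      rw [← hfiber, Finset.mul_sum]
      apply Finset.sum_le_sum
      intro m hm
      rw [Finset.mem_Ioc] at hm
      have hm1 : 1 ≤ m := by omega
      have hm0 : (0 : ℝ) < (m : ℝ) := by exact_mod_cast hm1
      have hfilt : ∀ z ∈ G2.filter (fun z => supN z = m), supN z = m := by
        intro z hz; exact (Finset.mem_filter.1 hz).2
      have hcard := shell_card_le hd hm1 hfilt
      have hinner : ∑ z ∈ G2.filter (fun z => supN z = m), (supN z : ℝ) ^ (-α)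
          = ((G2.filter (fun z => supN z = m)).card : ℝ) * (m : ℝ) ^ (-α) := by
        rw [Finset.sum_congr rfl (fun z hz => by rw [hfilt z hz])]
        rw [Finset.sum_const, nsmul_eq_mul]
      rw [hinner]
      have hmr : (3 * (m : ℝ)) ^ (d - 1) * (m : ℝ) ^ (-α) = 3 ^ (d - 1) * (m : ℝ) ^ (p - 1) := by
        rw [mul_pow]
        have h1 : ((m : ℝ)) ^ (d - 1 : ℕ) * (m : ℝ) ^ (-α) = (m : ℝ) ^ (p - 1) := by
          rw [← Real.rpow_natCast (m : ℝ) (d - 1), ← Real.rpow_add hm0]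
          congr 1
          rw [hpdef, Nat.cast_sub hd]
          push_cast
          ring
        rw [mul_assoc, h1]
      calc ((G2.filter (fun z => supN z = m)).card : ℝ) * (m : ℝ) ^ (-α)
          ≤ 2 * d * (3 * (m : ℝ)) ^ (d - 1) * (m : ℝ) ^ (-α) := by
            apply mul_le_mul_of_nonneg_right hcard (Real.rpow_nonneg hm0.le _)
        _ = K * (m : ℝ) ^ (p - 1) := by rw [mul_assoc, hmr, hKdef]; ring
    have hstep3 : ∑ m ∈ Finset.Ioc N M, (m : ℝ) ^ (p - 1) ≤ C0 * (N : ℝ) ^ p :=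
      htail N M hN1
    have hNp : (N : ℝ) ^ p ≤ 2 ^ (-p) * r ^ p := by
      have h1 : r / 2 ≤ (N : ℝ) := by linarith
      have h2 : (0 : ℝ) < r / 2 := by linarith
      have h3 : (N : ℝ) ^ p ≤ (r / 2) ^ p :=
        Real.rpow_le_rpow_of_nonpos h2 h1 hp.le
      have h4 : (r / 2 : ℝ) ^ p = r ^ p / 2 ^ p := Real.div_rpow (by linarith) (by norm_num) p
      have h5 : r ^ p / 2 ^ p = 2 ^ (-p) * r ^ p := by
        rw [Real.rpow_neg (by norm_num : (0:ℝ) ≤ 2)]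
        ring
      rw [h4, h5] at h3
      exact h3
    have hsum2 : ∑ z ∈ G2, (supN z : ℝ) ^ (-α) ≤ K * (C0 * (2 ^ (-p) * r ^ p)) := by
      refine le_trans hstep2 ?_
      apply mul_le_mul_of_nonneg_left _ hK0.le
      refine le_trans hstep3 ?_
      exact mul_le_mul_of_nonneg_left hNp hC0.le
    calc ∑ z ∈ G2, f z ≤ lam * b * ∑ z ∈ G2, (supN z : ℝ) ^ (-α) := hstep1
      _ ≤ lam * b * (K * (C0 * (2 ^ (-p) * r ^ p))) := by
          apply mul_le_mul_of_nonneg_left hsum2 (by positivity)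
      _ = lam * K * C0 * 2 ^ (-p) * (b * r ^ p) := by ring
      _ = lam * K * C0 * 2 ^ (-p) * b ^ ((d : ℝ) / α) := by rw [hbrp]
  have := add_le_add hpart1 hpart2
  calc ∑ z ∈ G1, f z + ∑ z ∈ G2, f z
      ≤ 3 ^ d * b ^ ((d : ℝ) / α) + lam * K * C0 * 2 ^ (-p) * b ^ ((d : ℝ) / α) := this
    _ = (3 ^ d + lam * K * C0 * 2 ^ (-p)) * b ^ ((d : ℝ) / α) := by ring


/-- For `d ≥ 1`, `α > d` and `λ > 0` there is `c > 0` such that for all `b ≥ 1`,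
`∑_{y ∈ ℤ^d, y ≠ 0} (1 - exp(-λ b ‖y‖^{-α})) ≤ c b^{d/α}`. -/
theorem stmt3 (d : ℕ) (hd : 1 ≤ d) (α lam : ℝ) (hα : (d : ℝ) < α) (hlam : 0 < lam) :
    ∃ c > (0 : ℝ), ∀ b : ℝ, 1 ≤ b →
      Summable (fun y : {y : Fin d → ℤ // y ≠ 0} =>
        1 - Real.exp (-(lam * b * euclNorm y.1 ^ (-α)))) ∧
      (∑' y : {y : Fin d → ℤ // y ≠ 0},
          (1 - Real.exp (-(lam * b * euclNorm y.1 ^ (-α)))))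
        ≤ c * b ^ ((d : ℝ) / α) := by
  obtain ⟨c, hc, hmain⟩ := main_bound hd hα hlam
  refine ⟨c, hc, ?_⟩
  intro b hb
  have hb0 : (0 : ℝ) < b := by linarith
  set f : {y : Fin d → ℤ // y ≠ 0} → ℝ :=
    fun y => 1 - Real.exp (-(lam * b * euclNorm y.1 ^ (-α))) with hf
  have hnonneg : 0 ≤ f := by
    intro y
    have ht : 0 ≤ lam * b * euclNorm y.1 ^ (-α) := by
      have := Real.rpow_nonneg (euclNorm_nonneg y.1) (-α)
      positivity
    have h1 : Real.exp (-(lam * b * euclNorm y.1 ^ (-α))) ≤ 1 := by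
      rw [Real.exp_le_one_iff]; linarith
    simp only [hf, Pi.zero_apply]
    linarith
  have hbound : ∀ u : Finset {y : Fin d → ℤ // y ≠ 0},
      ∑ y ∈ u, f y ≤ c * b ^ ((d : ℝ) / α) := by
    intro u
    have himg := Finset.sum_image
      (g := (Subtype.val : {y : Fin d → ℤ // y ≠ 0} → (Fin d → ℤ))) (s := u)
      (f := fun z => 1 - Real.exp (-(lam * b * euclNorm z ^ (-α))))
      (fun x _ y _ h => Subtype.val_injective h)
    have : ∑ y ∈ u, f y
        = ∑ z ∈ u.image Subtype.val, (1 - Real.exp (-(lam * b * euclNorm z ^ (-α)))) := by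
      rw [himg]
    rw [this]
    apply hmain b hb
    intro z hz
    rcases Finset.mem_image.1 hz with ⟨y, -, rfl⟩
    exact y.2
  have hsum : Summable f := summable_of_sum_le hnonneg hbound
  exact ⟨hsum, Summable.tsum_le_of_sum_le hsum hbound⟩
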